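/- Let 1 ≤ d ≤ n be integers and let V be a d-varifold whose mass ‖V‖ is d-regular with constant C₀ ≥ 1. Let (V_i) be a sequence of d-varifolds such that supp V_i ⊆ K × G_{d,n} for a fixed compact set K ⊆ ℝⁿ and such that ∫f dV_i → ∫f dV for every continuous compactly supported f : ℝⁿ × G_{d,n} → ℝ. Then δ(V, V_i) → 0 as i → ∞. -/

import Mathlib

open MeasureTheory
open scoped RealInnerProductSpace

noncomputable section

/-- The Grassmannian `G_{d,n}`, identified with the set of orthogonal projections of rank `d`:
self-adjoint idempotent operators of trace `d` on `ℝⁿ`, metrized by the operator norm. -/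
def GrassSet (d n : ℕ) : Set (EuclideanSpace ℝ (Fin n) →L[ℝ] EuclideanSpace ℝ (Fin n)) :=
  {P | (∀ v w : EuclideanSpace ℝ (Fin n), ⟪P v, w⟫ = ⟪v, P w⟫) ∧ P.comp P = P ∧
    LinearMap.trace ℝ (EuclideanSpace ℝ (Fin n))
      (P : EuclideanSpace ℝ (Fin n) →ₗ[ℝ] EuclideanSpace ℝ (Fin n)) = (d : ℝ)}

instance (d n : ℕ) : MeasurableSpace ↥(GrassSet d n) := borel _
instance (d n : ℕ) : BorelSpace ↥(GrassSet d n) := ⟨rfl⟩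

/-- `ℝⁿ × G_{d,n}` with the product metric; a `d`-varifold is a finite Borel measure on it. -/
abbrev VarSpace (d n : ℕ) := EuclideanSpace ℝ (Fin n) × ↥(GrassSet d n)

/-- The mass `‖V‖` of a varifold: pushforward under the first projection. -/
def varMass {d n : ℕ} (V : Measure (VarSpace d n)) : Measure (EuclideanSpace ℝ (Fin n)) :=
  V.map Prod.fst

/-- Support of a Borel measure: points all of whose open neighbourhoods have positive measure. -/
def msupport {X : Type*} [TopologicalSpace X] [MeasurableSpace X] (μ : Measure X) : Set X :=
  {x | ∀ U : Set X, IsOpen U → x ∈ U → 0 < μ U}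

/-- `ν` is `d`-regular (Ahlfors regular) with constant `C₀ ≥ 1`. -/
def IsDRegular {X : Type*} [MeasurableSpace X] [PseudoMetricSpace X]
    (d : ℕ) (C₀ : ℝ) (ν : Measure X) : Prop :=
  ∀ x ∈ msupport ν, ∀ r : ℝ, r ∈ Set.Ioc (0 : ℝ) 2 →
    ENNReal.ofReal (C₀⁻¹ * r ^ d) ≤ ν (Metric.ball x r) ∧
    ν (Metric.ball x r) ≤ ENNReal.ofReal (C₀ * r ^ d)

/-- Localized bounded Lipschitz (flat) distance on a metric space. -/
def flatDistIn {X : Type*} [MeasurableSpace X] [PseudoMetricSpace X]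
    (U : Set X) (μ ν : Measure X) : ℝ :=
  sSup {r | ∃ φ : X → ℝ, LipschitzWith 1 φ ∧ (∀ x, |φ x| ≤ 1) ∧ (∀ x ∉ U, φ x = 0) ∧
    r = (∫ x, φ x ∂μ) - ∫ x, φ x ∂ν}

/-- Modified Prokhorov distance `η_d`. -/
def etaDist {X : Type*} [MeasurableSpace X] [PseudoMetricSpace X]
    (d : ℕ) (μ ν : Measure X) : ℝ :=
  sInf {δ : ℝ | 0 < δ ∧ ∀ (x : X) (r : ℝ),
    μ (Metric.closedBall x r) ≤
        ν (Metric.thickening δ (Metric.closedBall x r)) + ENNReal.ofReal (δ ^ d) ∧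
    ν (Metric.closedBall x r) ≤
        μ (Metric.thickening δ (Metric.closedBall x r)) + ENNReal.ofReal (δ ^ d)}

/-- The `ε`-approximate mean curvature
`H_ε(x,V) = −(d/(nε)) (∫ ρ′(|y−x|/ε) S((y−x)/|y−x|) dV(y,S)) / (∫ ξ(|y−x|/ε) d‖V‖(y))`. -/
def varH {d n : ℕ} (ρ ξ : ℝ → ℝ) (ε : ℝ) (x : EuclideanSpace ℝ (Fin n))
    (V : Measure (VarSpace d n)) : EuclideanSpace ℝ (Fin n) :=
  (-((d : ℝ) / (n * ε)) / ∫ y, ξ (‖y - x‖ / ε) ∂(varMass V)) •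
    ∫ p, (deriv ρ (‖p.1 - x‖ / ε) / ‖p.1 - x‖) •
      ((p.2 : EuclideanSpace ℝ (Fin n) →L[ℝ] EuclideanSpace ℝ (Fin n)) (p.1 - x)) ∂V

/-- The quantity `δ(V,W) = sup_{x ∈ supp ‖V‖, r > 0}
`Δ_{B(x,r)×G}(V,W) / (η_d(‖V‖,‖W‖) + r)^d`. -/
def varDelta {d n : ℕ} (V W : Measure (VarSpace d n)) : ℝ :=
  sSup {t | ∃ x ∈ msupport (varMass V), ∃ r : ℝ, 0 < r ∧
    t = flatDistIn (Metric.ball x r ×ˢ (Set.univ : Set ↥(GrassSet d n))) V W /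
      (etaDist d (varMass V) (varMass W) + r) ^ d}

-- ### Part 1: Grassmannian compactness

theorem grassSet_isCompact (d n : ℕ) : IsCompact (GrassSet d n) := by
  have hb : GrassSet d n ⊆ Metric.closedBall 0 1 := by
    rintro P ⟨hsym, hidem, -⟩
    rw [Metric.mem_closedBall, dist_zero_right]
    refine ContinuousLinearMap.opNorm_le_bound P zero_le_one fun v => ?_
    rw [one_mul]
    have hPP : P (P v) = P v := by
      conv_rhs => rw [← hidem]
      rfl
    have h1 : ‖P v‖ ^ 2 = ⟪v, P v⟫ := by
      rw [← real_inner_self_eq_norm_sq]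
      rw [hsym v (P v), hPP]
    have h2 : ⟪v, P v⟫ ≤ ‖v‖ * ‖P v‖ := real_inner_le_norm v (P v)
    nlinarith [norm_nonneg (P v), norm_nonneg v]
  have hc : IsClosed (GrassSet d n) := by
    have h1 : IsClosed {P : EuclideanSpace ℝ (Fin n) →L[ℝ] EuclideanSpace ℝ (Fin n) |
        ∀ v w : EuclideanSpace ℝ (Fin n), ⟪P v, w⟫ = ⟪v, P w⟫} := by
      have : {P : EuclideanSpace ℝ (Fin n) →L[ℝ] EuclideanSpace ℝ (Fin n) |
          ∀ v w : EuclideanSpace ℝ (Fin n), ⟪P v, w⟫ = ⟪v, P w⟫} =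
          ⋂ (v : EuclideanSpace ℝ (Fin n)) (w : EuclideanSpace ℝ (Fin n)),
            {P | ⟪P v, w⟫ = ⟪v, P w⟫} := by
        ext P; simp [Set.mem_iInter]
      rw [this]
      refine isClosed_iInter fun v => isClosed_iInter fun w => isClosed_eq ?_ ?_
      · exact (continuous_id.clm_apply continuous_const).inner continuous_const
      · exact continuous_const.inner (continuous_id.clm_apply continuous_const)
    have h2 : IsClosed {P : EuclideanSpace ℝ (Fin n) →L[ℝ] EuclideanSpace ℝ (Fin n) |
        P.comp P = P} := isClosed_eq (continuous_id.clm_comp continuous_id) continuous_id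
    have h3 : IsClosed {P : EuclideanSpace ℝ (Fin n) →L[ℝ] EuclideanSpace ℝ (Fin n) |
        LinearMap.trace ℝ (EuclideanSpace ℝ (Fin n))
          (P : EuclideanSpace ℝ (Fin n) →ₗ[ℝ] EuclideanSpace ℝ (Fin n)) = (d : ℝ)} := by
      refine isClosed_eq ?_ continuous_const
      exact LinearMap.continuous_of_finiteDimensional
        ((LinearMap.trace ℝ (EuclideanSpace ℝ (Fin n))).comp
          (ContinuousLinearMap.coeLM ℝ))
    exact (h1.inter (h2.inter h3))
  exact (isCompact_closedBall (0 : EuclideanSpace ℝ (Fin n) →L[ℝ] EuclideanSpace ℝ (Fin n))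
    1).of_isClosed_subset hc hb

instance (d n : ℕ) : CompactSpace ↥(GrassSet d n) :=
  isCompact_iff_compactSpace.mp (grassSet_isCompact d n)

-- ### Part 2: msupport

theorem msupport_compl_null {X : Type*} [TopologicalSpace X] [MeasurableSpace X]
    [SecondCountableTopology X] (μ : Measure X) :
    μ (msupport μ)ᶜ = 0 := by
  have h : (msupport μ)ᶜ = ⋃₀ {U : Set X | IsOpen U ∧ μ U = 0} := by
    ext x
    simp only [Set.mem_compl_iff, msupport, Set.mem_setOf_eq, Set.mem_sUnion]
    constructor
    · intro hx
      push_neg at hx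
      obtain ⟨U, hU, hxU, hμ⟩ := hx
      exact ⟨U, ⟨hU, le_antisymm hμ bot_le⟩, hxU⟩
    · rintro ⟨U, ⟨hU, hμ⟩, hxU⟩ h'
      exact absurd (h' U hU hxU) (by simp [hμ])
  rw [h]
  obtain ⟨T, hTc, hTS, hTU⟩ :=
    TopologicalSpace.isOpen_sUnion_countable {U : Set X | IsOpen U ∧ μ U = 0}
      (fun s hs => hs.1)
  rw [← hTU]
  exact (measure_sUnion_null_iff hTc).2 fun s hs => (hTS hs).2

section Flat
variable {X : Type*} [MeasurableSpace X] [PseudoMetricSpace X] [OpensMeasurableSpace X]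

def flatSet (U : Set X) (μ ν : Measure X) : Set ℝ :=
  {r | ∃ φ : X → ℝ, LipschitzWith 1 φ ∧ (∀ x, |φ x| ≤ 1) ∧ (∀ x ∉ U, φ x = 0) ∧
    r = (∫ x, φ x ∂μ) - ∫ x, φ x ∂ν}

theorem integrable_of_bdd_cont {φ : X → ℝ} (μ : Measure X) [IsFiniteMeasure μ]
    (hc : Continuous φ) (hb : ∀ x, |φ x| ≤ 1) : Integrable φ μ :=
  (integrable_const (1:ℝ)).mono' hc.aestronglyMeasurable
    (Filter.Eventually.of_forall fun x => by simpa using hb x)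

theorem flatSet_bddAbove {U : Set X} {μ ν : Measure X} [IsFiniteMeasure μ] [IsFiniteMeasure ν] :
    BddAbove (flatSet U μ ν) := by
  refine ⟨(μ Set.univ).toReal + (ν Set.univ).toReal, fun t ht => ?_⟩
  obtain ⟨φ, hlip, hb, -, rfl⟩ := ht
  have h1 : ‖∫ x, φ x ∂μ‖ ≤ 1 * (μ Set.univ).toReal :=
    norm_integral_le_of_norm_le_const (Filter.Eventually.of_forall fun x => by simpa using hb x)
  have h2 : ‖∫ x, φ x ∂ν‖ ≤ 1 * (ν Set.univ).toReal :=
    norm_integral_le_of_norm_le_const (Filter.Eventually.of_forall fun x => by simpa using hb x)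
  rw [one_mul] at h1 h2
  rw [Real.norm_eq_abs] at h1 h2
  have := abs_sub ((∫ x, φ x ∂μ)) ((∫ x, φ x ∂ν))
  have := le_abs_self ((∫ x, φ x ∂μ) - ∫ x, φ x ∂ν)
  linarith

theorem flatSet_zero_mem (U : Set X) (μ ν : Measure X) : (0:ℝ) ∈ flatSet U μ ν := by
  refine ⟨fun _ => 0, ?_, by simp, fun _ _ => rfl, by simp⟩
  simpa using (LipschitzWith.const (0:ℝ)).weaken zero_le_one

theorem flatSet_sSup_nonneg (U : Set X) (μ ν : Measure X) [IsFiniteMeasure μ]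
    [IsFiniteMeasure ν] : 0 ≤ sSup (flatSet U μ ν) :=
  le_csSup flatSet_bddAbove (flatSet_zero_mem U μ ν)

theorem flatSet_mono_le {U : Set X} {μ ν : Measure X} [IsFiniteMeasure μ] [IsFiniteMeasure ν] :
    sSup (flatSet U μ ν) ≤ sSup (flatSet Set.univ μ ν) := by
  refine Real.sSup_le (fun t ht => ?_) (flatSet_sSup_nonneg _ μ ν)
  obtain ⟨φ, hlip, hb, hs, rfl⟩ := ht
  exact le_csSup flatSet_bddAbove ⟨φ, hlip, hb, fun x hx => absurd (Set.mem_univ x) hx, rfl⟩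

theorem flat_tendsto (C : Set X) (hC : IsCompact C)
    (V : Measure X) [IsFiniteMeasure V] (Vi : ℕ → Measure X) (hfin : ∀ i, IsFiniteMeasure (Vi i))
    (hV0 : V Cᶜ = 0) (hVi0 : ∀ i, Vi i Cᶜ = 0)
    (hconv : ∀ f : X → ℝ, Continuous f → (∀ x, |f x| ≤ 1) →
      Filter.Tendsto (fun i => ∫ x, f x ∂Vi i) Filter.atTop (nhds (∫ x, f x ∂V))) :
    Filter.Tendsto (fun i => sSup (flatSet Set.univ V (Vi i))) Filter.atTop (nhds 0) := by
  have key : ∀ ε : ℝ, 0 < ε → ∀ᶠ i in Filter.atTop,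
      ∀ φ : X → ℝ, LipschitzWith 1 φ → (∀ x, |φ x| ≤ 1) →
        |(∫ x, φ x ∂V) - ∫ x, φ x ∂(Vi i)| ≤ ε := by
    intro ε hε
    set M : ℝ := (V Set.univ).toReal with hM
    have hM0 : 0 ≤ M := ENNReal.toReal_nonneg
    set ε' : ℝ := ε / (6 * M + 4) with hε'def
    have hε'0 : 0 < ε' := by positivity
    have hmass : Filter.Tendsto (fun i => ((Vi i) Set.univ).toReal) Filter.atTop (nhds M) := by
      have h1 := hconv (fun _ => 1) continuous_const (by norm_num)
      have he : ∀ (W : Measure X), (∫ _ : X, (1:ℝ) ∂W) = (W Set.univ).toReal := by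
        intro W; simp [integral_const]; rfl
      rw [he] at h1
      refine h1.congr fun i => ?_
      exact he (Vi i)
    obtain ⟨tc, htcfin, htccov⟩ := Metric.totallyBounded_iff.1 hC.totallyBounded ε' hε'0
    haveI : Fintype ↥tc := htcfin.fintype
    set T : Set (X → ℝ) := {φ | LipschitzWith 1 φ ∧ ∀ x, |φ x| ≤ 1} with hT
    set e : (X → ℝ) → (↥tc → ℝ) := fun φ z => φ z with he
    have hS : TotallyBounded (e '' T) := by
      refine (isCompact_closedBall (0 : ↥tc → ℝ) 1).totallyBounded.subset ?_
      rintro - ⟨φ, hφ, rfl⟩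
      rw [Metric.mem_closedBall, dist_zero_right]
      refine (pi_norm_le_iff_of_nonneg zero_le_one).2 fun z => ?_
      simpa using hφ.2 z
    obtain ⟨t2, ht2S, ht2fin, ht2cov⟩ :=
      totallyBounded_iff_subset.1 hS _ (Metric.dist_mem_uniformity hε'0)
    have hrep : ∀ y : (↥tc → ℝ), ∃ φ : X → ℝ, y ∈ t2 → φ ∈ T ∧ e φ = y := by
      intro y
      by_cases hy : y ∈ t2
      · obtain ⟨φ, hφ, hφe⟩ := ht2S hy
        exact ⟨φ, fun _ => ⟨hφ, hφe⟩⟩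
      · exact ⟨fun _ => 0, fun h => absurd h hy⟩
    choose rep hrep using hrep
    have hev1 : ∀ᶠ i in Filter.atTop, ∀ y ∈ t2,
        |(∫ x, rep y x ∂V) - ∫ x, rep y x ∂(Vi i)| ≤ ε' := by
      rw [Filter.eventually_all_finite ht2fin]
      intro y hy
      have hrT := hrep y hy
      have ht := hconv (rep y) hrT.1.1.continuous hrT.1.2
      have h := ht (Metric.closedBall_mem_nhds _ hε'0)
      rw [Filter.mem_map] at h
      filter_upwards [h] with i hi
      rw [Set.mem_preimage, Metric.mem_closedBall, Real.dist_eq] at hi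
      rw [abs_sub_comm]
      exact hi
    have hev2 : ∀ᶠ i in Filter.atTop, ((Vi i) Set.univ).toReal ≤ M + 1 := by
      have h := hmass (Metric.closedBall_mem_nhds M one_pos)
      rw [Filter.mem_map] at h
      filter_upwards [h] with i hi
      rw [Set.mem_preimage, Metric.mem_closedBall, Real.dist_eq] at hi
      linarith [abs_le.1 hi |>.2]
    filter_upwards [hev1, hev2] with i h1 h2
    intro φ hlip hb
    haveI := hfin i
    have hφT : φ ∈ T := ⟨hlip, hb⟩
    have hmem : e φ ∈ e '' T := ⟨φ, hφT, rfl⟩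
    obtain ⟨y, hy, hyball⟩ : ∃ y ∈ t2, dist (e φ) y < ε' := by
      have := ht2cov hmem
      simpa using this
    set ψ := rep y with hψdef
    have hψ := hrep y hy
    have hψT : ψ ∈ T := hψ.1
    have hdist : dist (e φ) (e ψ) < ε' := by
      rw [hψ.2]; exact hyball
    have hclose : ∀ p ∈ C, |φ p - ψ p| ≤ 3 * ε' := by
      intro p hp
      obtain ⟨z, hz, hpz⟩ : ∃ z ∈ tc, p ∈ Metric.ball z ε' := by
        have := htccov hp
        simpa using this
      have hz1 : dist (φ p) (φ z) ≤ dist p z := by simpa using hlip.dist_le_mul p z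
      have hz2 : dist (ψ z) (ψ p) ≤ dist z p := by simpa using hψT.1.dist_le_mul z p
      have hz3 : dist (φ z) (ψ z) ≤ dist (e φ) (e ψ) := by
        simpa [he] using dist_le_pi_dist (e φ) (e ψ) (⟨z, hz⟩ : ↥tc)
      have hpz' : dist p z < ε' := Metric.mem_ball.1 hpz
      have h4 : dist (φ p) (ψ p) ≤ dist (φ p) (φ z) + dist (φ z) (ψ z) + dist (ψ z) (ψ p) :=
        dist_triangle4 _ _ _ _
      rw [← Real.dist_eq]
      have : dist z p = dist p z := dist_comm z p
      linarith
    have haeV : ∀ᵐ p ∂V, p ∈ C := by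
      rw [ae_iff]
      exact hV0
    have haeVi : ∀ᵐ p ∂(Vi i), p ∈ C := by
      rw [ae_iff]
      exact hVi0 i
    have hintφV : Integrable φ V := integrable_of_bdd_cont V hlip.continuous hb
    have hintψV : Integrable ψ V := integrable_of_bdd_cont V hψT.1.continuous hψT.2
    have hintφW : Integrable φ (Vi i) := integrable_of_bdd_cont _ hlip.continuous hb
    have hintψW : Integrable ψ (Vi i) := integrable_of_bdd_cont _ hψT.1.continuous hψT.2
    have hb1 : |(∫ x, φ x ∂V) - ∫ x, ψ x ∂V| ≤ 3 * ε' * M := by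
      rw [← integral_sub hintφV hintψV, ← Real.norm_eq_abs]
      exact norm_integral_le_of_norm_le_const
        (haeV.mono fun p hp => by simpa [Real.norm_eq_abs] using hclose p hp)
    have hb2 : |(∫ x, φ x ∂(Vi i)) - ∫ x, ψ x ∂(Vi i)| ≤ 3 * ε' * (M + 1) := by
      rw [← integral_sub hintφW hintψW, ← Real.norm_eq_abs]
      calc ‖∫ x, (φ x - ψ x) ∂(Vi i)‖ ≤ 3 * ε' * ((Vi i) Set.univ).toReal :=
            norm_integral_le_of_norm_le_const
              (haeVi.mono fun p hp => by simpa [Real.norm_eq_abs] using hclose p hp)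
        _ ≤ 3 * ε' * (M + 1) := by
            have := h2
            nlinarith
    have hb3 := h1 y hy
    have habs : |(∫ x, φ x ∂V) - ∫ x, φ x ∂(Vi i)| ≤
        |(∫ x, φ x ∂V) - ∫ x, ψ x ∂V| + |(∫ x, ψ x ∂V) - ∫ x, ψ x ∂(Vi i)| +
        |(∫ x, ψ x ∂(Vi i)) - ∫ x, φ x ∂(Vi i)| := by
      have := abs_sub_abs_le_abs_sub ((∫ x, φ x ∂V)) ((∫ x, φ x ∂(Vi i)))
      calc |(∫ x, φ x ∂V) - ∫ x, φ x ∂(Vi i)| =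
          |((∫ x, φ x ∂V) - ∫ x, ψ x ∂V) + ((∫ x, ψ x ∂V) - ∫ x, ψ x ∂(Vi i)) +
            ((∫ x, ψ x ∂(Vi i)) - ∫ x, φ x ∂(Vi i))| := by ring_nf
        _ ≤ _ := by
            exact (abs_add_three _ _ _)
    have hfinal : |(∫ x, φ x ∂V) - ∫ x, φ x ∂(Vi i)| ≤ ε' * (6 * M + 4) := by
      have := abs_sub_comm ((∫ x, ψ x ∂(Vi i))) ((∫ x, φ x ∂(Vi i)))
      rw [this] at habs
      linarith [habs, hb1, hb2, hb3]
    have : ε' * (6 * M + 4) = ε := by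
      rw [hε'def]; field_simp
    linarith [hfinal]
  rw [NormedAddCommGroup.tendsto_nhds_zero]
  intro ε hε
  filter_upwards [key (ε/2) (half_pos hε)] with i hi
  haveI := hfin i
  have hle : sSup (flatSet Set.univ V (Vi i)) ≤ ε/2 := by
    refine Real.sSup_le (fun t ht => ?_) (le_of_lt (half_pos hε))
    obtain ⟨φ, hlip, hb, -, rfl⟩ := ht
    have h := hi φ hlip hb
    have := le_abs_self ((∫ x, φ x ∂V) - ∫ x, φ x ∂(Vi i))
    linarith
  have hge := flatSet_sSup_nonneg Set.univ V (Vi i)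
  rw [Real.norm_eq_abs, abs_of_nonneg hge]
  linarith

end Flat

-- ### Part 4: quantitative lemmas on VarSpace

theorem lipschitz_const_sub (δ : ℝ) : LipschitzWith 1 (fun t : ℝ => δ - t) := by
  refine LipschitzWith.of_dist_le_mul fun a b => ?_
  apply le_of_eq
  push_cast
  rw [one_mul, Real.dist_eq, Real.dist_eq, abs_sub_comm]
  congr 1
  ring

section Quant

variable {d n : ℕ}

theorem varMass_apply (V : Measure (VarSpace d n)) {s : Set (EuclideanSpace ℝ (Fin n))}
    (hs : MeasurableSet s) :
    varMass V s = V (s ×ˢ (Set.univ : Set ↥(GrassSet d n))) := by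
  rw [varMass, Measure.map_apply measurable_fst hs]
  congr 1
  ext p
  simp [Set.mem_prod]

theorem integral_fst (V : Measure (VarSpace d n)) {g : EuclideanSpace ℝ (Fin n) → ℝ}
    (hg : Continuous g) :
    (∫ y, g y ∂(varMass V)) = ∫ p, g p.1 ∂V := by
  rw [varMass]
  exact integral_map measurable_fst.aemeasurable hg.aestronglyMeasurable

instance varMass_finite (V : Measure (VarSpace d n)) [IsFiniteMeasure V] :
    IsFiniteMeasure (varMass V) := by
  constructor
  rw [varMass, Measure.map_apply measurable_fst MeasurableSet.univ]
  exact measure_lt_top V _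

/-- Membership of `δ` in the defining set of `etaDist`, from a flat-distance bound. -/
theorem mem_etaSet (V W : Measure (VarSpace d n)) [IsFiniteMeasure V] [IsFiniteMeasure W]
    {δ : ℝ} (hδ0 : 0 < δ) (hδ1 : δ ≤ 1)
    (hF : sSup (flatSet Set.univ V W) ≤ δ ^ (d + 1)) :
    δ ∈ {δ : ℝ | 0 < δ ∧ ∀ (x : EuclideanSpace ℝ (Fin n)) (r : ℝ),
      varMass V (Metric.closedBall x r) ≤
          varMass W (Metric.thickening δ (Metric.closedBall x r)) + ENNReal.ofReal (δ ^ d) ∧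
      varMass W (Metric.closedBall x r) ≤
          varMass V (Metric.thickening δ (Metric.closedBall x r)) + ENNReal.ofReal (δ ^ d)} := by
  refine ⟨hδ0, fun x r => ?_⟩
  rcases lt_or_ge r 0 with hr | hr
  · rw [Metric.closedBall_eq_empty.2 hr]
    simp
  set B := Metric.closedBall x r with hB
  have hBne : B.Nonempty := Metric.nonempty_closedBall.2 hr
  set g : EuclideanSpace ℝ (Fin n) → ℝ := fun y => max 0 (δ - Metric.infDist y B) with hg
  have hglip : LipschitzWith 1 g := by
    have h1 : LipschitzWith 1 (fun y : EuclideanSpace ℝ (Fin n) => δ - Metric.infDist y B) := by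
      have := (lipschitz_const_sub δ).comp (Metric.lipschitz_infDist_pt B); rw [one_mul] at this; exact this
    exact h1.const_max 0
  have hgcont : Continuous g := hglip.continuous
  have hg0 : ∀ y, 0 ≤ g y := fun y => le_max_left _ _
  have hgδ : ∀ y, g y ≤ δ := fun y => by
    have := Metric.infDist_nonneg (s := B) (x := y)
    apply max_le hδ0.le
    linarith
  have hgb : ∀ y, |g y| ≤ 1 := fun y => abs_le.2 ⟨by linarith [hg0 y], le_trans (hgδ y) hδ1⟩
  have hgB : ∀ y ∈ B, g y = δ := fun y hy => by
    simp only [hg, Metric.infDist_zero_of_mem hy, sub_zero]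
    exact max_eq_right hδ0.le
  have hgout : ∀ y, y ∉ Metric.thickening δ B → g y = 0 := fun y hy => by
    have h1 : ¬ Metric.infDist y B < δ := fun h =>
      hy ((Metric.mem_thickening_iff_infDist_lt hBne).2 h)
    simp only [hg]
    exact max_eq_left (by linarith [not_lt.1 h1])
  have hXlip : LipschitzWith 1 (fun p : VarSpace d n => g p.1) := by
    have := hglip.comp (LipschitzWith.prod_fst (α := EuclideanSpace ℝ (Fin n)) (β := ↥(GrassSet d n))); rw [one_mul] at this; exact this
  have hXb : ∀ p : VarSpace d n, |g p.1| ≤ 1 := fun p => hgb p.1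
  have hthm : MeasurableSet (Metric.thickening δ B) := Metric.isOpen_thickening.measurableSet
  have claim : ∀ μ ν : Measure (VarSpace d n), IsFiniteMeasure μ → IsFiniteMeasure ν →
      ((∫ p, g p.1 ∂μ) - ∫ p, g p.1 ∂ν ≤ δ ^ (d+1)) →
      varMass μ B ≤ varMass ν (Metric.thickening δ B) + ENNReal.ofReal (δ ^ d) := by
    intro μ ν hμ hν hdiff
    haveI := hμ; haveI := hν
    have hlow : δ * (varMass μ B).toReal ≤ ∫ p, g p.1 ∂μ := by
      rw [← integral_fst μ hgcont]
      have h1 : (∫ y, B.indicator (fun _ => δ) y ∂(varMass μ)) = δ * ((varMass μ) B).toReal := by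
        rw [integral_indicator_const _ measurableSet_closedBall, smul_eq_mul, mul_comm]; rfl
      rw [← h1]
      refine integral_mono ((integrable_const δ).indicator measurableSet_closedBall)
        (integrable_of_bdd_cont _ hgcont hgb) fun y => ?_
      by_cases hy : y ∈ B
      · rw [Set.indicator_of_mem hy]
        exact (hgB y hy).ge
      · rw [Set.indicator_of_notMem hy]
        exact hg0 y
    have hup : (∫ p, g p.1 ∂ν) ≤ δ * ((varMass ν) (Metric.thickening δ B)).toReal := by
      rw [← integral_fst ν hgcont]
      have h1 : (∫ y, (Metric.thickening δ B).indicator (fun _ => δ) y ∂(varMass ν)) =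
          δ * ((varMass ν) (Metric.thickening δ B)).toReal := by
        rw [integral_indicator_const _ hthm, smul_eq_mul, mul_comm]; rfl
      rw [← h1]
      refine integral_mono (integrable_of_bdd_cont _ hgcont hgb)
        ((integrable_const δ).indicator hthm) fun y => ?_
      by_cases hy : y ∈ Metric.thickening δ B
      · rw [Set.indicator_of_mem hy]
        exact hgδ y
      · rw [Set.indicator_of_notMem hy, hgout y hy]
    have hreal : (varMass μ B).toReal ≤ ((varMass ν) (Metric.thickening δ B)).toReal + δ ^ d := by
      have hδd : δ ^ (d+1) = δ * δ ^ d := by ring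
      have h2 : δ * (varMass μ B).toReal ≤
          δ * (((varMass ν) (Metric.thickening δ B)).toReal + δ ^ d) := by
        rw [mul_add, ← hδd]
        linarith
      exact le_of_mul_le_mul_left h2 hδ0
    calc varMass μ B = ENNReal.ofReal (varMass μ B).toReal :=
          (ENNReal.ofReal_toReal (measure_ne_top _ _)).symm
      _ ≤ ENNReal.ofReal (((varMass ν) (Metric.thickening δ B)).toReal + δ ^ d) :=
          ENNReal.ofReal_le_ofReal hreal
      _ = ENNReal.ofReal ((varMass ν) (Metric.thickening δ B)).toReal + ENNReal.ofReal (δ ^ d) :=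
          ENNReal.ofReal_add ENNReal.toReal_nonneg (by positivity)
      _ = _ := by rw [ENNReal.ofReal_toReal (measure_ne_top _ _)]
  have hd1 : (∫ p, g p.1 ∂V) - ∫ p, g p.1 ∂W ≤ δ ^ (d+1) := by
    refine le_trans (le_csSup flatSet_bddAbove ?_) hF
    exact ⟨fun p => g p.1, hXlip, hXb, fun p hp => absurd (Set.mem_univ p) hp, rfl⟩
  have hd2 : (∫ p, g p.1 ∂W) - ∫ p, g p.1 ∂V ≤ δ ^ (d+1) := by
    refine le_trans (le_csSup flatSet_bddAbove ?_) hF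
    refine ⟨fun p => -(g p.1), hXlip.neg, fun p => by simpa using hXb p,
      fun p hp => absurd (Set.mem_univ p) hp, ?_⟩
    rw [integral_neg, integral_neg]
    ring
  exact ⟨claim V W inferInstance inferInstance hd1, claim W V inferInstance inferInstance hd2⟩

/-- The numerator is controlled by the masses of the ball. -/
theorem flat_ball_le (hd : 1 ≤ d) (hdn : d ≤ n)
    (V W : Measure (VarSpace d n)) [IsFiniteMeasure V] [IsFiniteMeasure W]
    (x : EuclideanSpace ℝ (Fin n)) {r : ℝ} (hr : 0 < r) :
    sSup (flatSet (Metric.ball x r ×ˢ (Set.univ : Set ↥(GrassSet d n))) V W) ≤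
      r * ((varMass V (Metric.ball x r)).toReal + (varMass W (Metric.ball x r)).toReal) := by
  have hn : 0 < n := lt_of_lt_of_le hd hdn
  set U := Metric.ball x r ×ˢ (Set.univ : Set ↥(GrassSet d n)) with hU
  have hbd0 : (0:ℝ) ≤ r * ((varMass V (Metric.ball x r)).toReal +
      (varMass W (Metric.ball x r)).toReal) := by positivity
  refine Real.sSup_le (fun t ht => ?_) hbd0
  obtain ⟨φ, hlip, hb, hsupp, rfl⟩ := ht
  have hpt : ∀ p : VarSpace d n, |φ p| ≤ U.indicator (fun _ => r) p := by
    intro p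
    by_cases hp : p ∈ U
    · rw [Set.indicator_of_mem hp]
      obtain ⟨hp1, -⟩ := hp
      obtain ⟨y', hy'1, hy'2⟩ : ∃ y' : EuclideanSpace ℝ (Fin n), ‖y' - x‖ = r ∧ ‖y' - p.1‖ ≤ r := by
        by_cases hyx : p.1 = x
        · refine ⟨x + r • EuclideanSpace.single (⟨0, hn⟩ : Fin n) (1:ℝ), ?_, ?_⟩
          · rw [add_sub_cancel_left, norm_smul, EuclideanSpace.norm_single]
            simp [abs_of_pos hr]
          · rw [hyx, add_sub_cancel_left, norm_smul, EuclideanSpace.norm_single]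
            simp [abs_of_pos hr]
        · set c : ℝ := r / ‖p.1 - x‖ with hc
          have hpx : 0 < ‖p.1 - x‖ := by
            rw [norm_pos_iff, sub_ne_zero]
            exact hyx
          have hcr : ‖p.1 - x‖ < r := by
            have := Metric.mem_ball.1 hp1
            rwa [dist_eq_norm] at this
          have hc1 : 1 < c := (one_lt_div hpx).2 hcr
          refine ⟨x + c • (p.1 - x), ?_, ?_⟩
          · rw [add_sub_cancel_left, norm_smul, Real.norm_eq_abs, abs_of_pos (by linarith), hc]
            field_simp
          · have heq : x + c • (p.1 - x) - p.1 = (c - 1) • (p.1 - x) := by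
              rw [sub_smul, one_smul]
              abel
            rw [heq, norm_smul, Real.norm_eq_abs, abs_of_pos (by linarith)]
            have heq2 : (c - 1) * ‖p.1 - x‖ = r - ‖p.1 - x‖ := by
              rw [hc]
              field_simp
            rw [heq2]
            linarith
      set q : VarSpace d n := (y', p.2) with hq
      have hqU : q ∉ U := by
        rintro ⟨hq1, -⟩
        have h1 := Metric.mem_ball.1 hq1
        rw [dist_eq_norm, hy'1] at h1
        exact lt_irrefl r h1
      have h0 : φ q = 0 := hsupp q hqU
      have hdpq : dist p q ≤ r := by
        rw [Prod.dist_eq]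
        apply max_le
        · rw [hq, dist_eq_norm, norm_sub_rev]
          exact hy'2
        · simp [hq]
          linarith
      calc |φ p| = |φ p - φ q| := by rw [h0, sub_zero]
        _ = dist (φ p) (φ q) := (Real.dist_eq _ _).symm
        _ ≤ 1 * dist p q := hlip.dist_le_mul p q
        _ ≤ r := by rw [one_mul]; exact hdpq
    · rw [Set.indicator_of_notMem hp, hsupp p hp]
      simp
  have hUmeas : MeasurableSet U := measurableSet_ball.prod MeasurableSet.univ
  have hiV : Integrable φ V := integrable_of_bdd_cont _ hlip.continuous hb
  have hiW : Integrable φ W := integrable_of_bdd_cont _ hlip.continuous hb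
  have hVU : V U = varMass V (Metric.ball x r) := (varMass_apply V measurableSet_ball).symm
  have hWU : W U = varMass W (Metric.ball x r) := (varMass_apply W measurableSet_ball).symm
  have key : ∀ μ : Measure (VarSpace d n), IsFiniteMeasure μ → Integrable φ μ →
      |∫ p, φ p ∂μ| ≤ r * (μ U).toReal := by
    intro μ hμ hint
    haveI := hμ
    rw [← Real.norm_eq_abs]
    calc ‖∫ p, φ p ∂μ‖ ≤ ∫ p, ‖φ p‖ ∂μ := norm_integral_le_integral_norm φ
      _ ≤ ∫ p, U.indicator (fun _ => r) p ∂μ :=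
          integral_mono hint.norm ((integrable_const r).indicator hUmeas)
            (fun p => by simpa [Real.norm_eq_abs] using hpt p)
      _ = (μ U).toReal * r := by rw [integral_indicator_const _ hUmeas, smul_eq_mul]; rfl
      _ = r * (μ U).toReal := by ring
  have h1 := key V inferInstance hiV
  have h2 := key W inferInstance hiW
  rw [hVU] at h1
  rw [hWU] at h2
  have ha := abs_le.1 h1
  have hbb := abs_le.1 h2
  have := ha.2
  have := hbb.1
  nlinarith [ha.1, ha.2, hbb.1, hbb.2]

end Quant


theorem flatDistIn_eq {X : Type*} [MeasurableSpace X] [PseudoMetricSpace X]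
    (U : Set X) (μ ν : Measure X) : flatDistIn U μ ν = sSup (flatSet U μ ν) := rfl

theorem stmt12 (d n : ℕ) (hd : 1 ≤ d) (hdn : d ≤ n) (C₀ : ℝ) (hC₀ : 1 ≤ C₀)
    (V : Measure (VarSpace d n)) [IsFiniteMeasure V]
    (hreg : IsDRegular d C₀ (varMass V))
    (Vi : ℕ → Measure (VarSpace d n)) (hfin : ∀ i, IsFiniteMeasure (Vi i))
    (K : Set (EuclideanSpace ℝ (Fin n))) (hK : IsCompact K)
    (hsupp : ∀ i, msupport (Vi i) ⊆ K ×ˢ (Set.univ : Set ↥(GrassSet d n)))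
    (hconv : ∀ f : VarSpace d n → ℝ, Continuous f → HasCompactSupport f →
      Filter.Tendsto (fun i => ∫ p, f p ∂(Vi i)) Filter.atTop (nhds (∫ p, f p ∂V))) :
    Filter.Tendsto (fun i => varDelta V (Vi i)) Filter.atTop (nhds 0) := by
  classical
  -- Step 1: enlarge K to a nonempty compact set
  set K' : Set (EuclideanSpace ℝ (Fin n)) := K ∪ Metric.closedBall 0 1 with hK'def
  have hK' : IsCompact K' := hK.union (isCompact_closedBall 0 1)
  have hK'ne : K'.Nonempty := ⟨0, Or.inr (Metric.mem_closedBall_self zero_le_one)⟩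
  have hKsub : K ⊆ K' := Set.subset_union_left
  -- bump functions
  set χ : ℕ → EuclideanSpace ℝ (Fin n) → ℝ :=
    fun j y => max 0 (min 1 ((j:ℝ) - Metric.infDist y K')) with hχdef
  have hχcont : ∀ j, Continuous (χ j) := fun j =>
    continuous_const.max (continuous_const.min
      (continuous_const.sub (Metric.continuous_infDist_pt K')))
  have hχ01 : ∀ j y, 0 ≤ χ j y ∧ χ j y ≤ 1 := fun j y =>
    ⟨le_max_left _ _, max_le zero_le_one (min_le_left _ _)⟩
  have hχabs : ∀ j (p : VarSpace d n), |χ j p.1| ≤ 1 := fun j p =>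
    abs_le.2 ⟨by linarith [(hχ01 j p.1).1], (hχ01 j p.1).2⟩
  have hχone : ∀ (j : ℕ) (y : EuclideanSpace ℝ (Fin n)), Metric.infDist y K' ≤ (j:ℝ) - 1 → χ j y = 1 := by
    intro j y hy
    have h1 : (1:ℝ) ≤ (j:ℝ) - Metric.infDist y K' := by linarith
    simp only [hχdef]
    rw [min_eq_left h1]
    exact max_eq_right zero_le_one
  have hχzero : ∀ (j : ℕ) (y : EuclideanSpace ℝ (Fin n)), (j:ℝ) ≤ Metric.infDist y K' → χ j y = 0 := by
    intro j y hy
    simp only [hχdef]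
    exact max_eq_left (le_trans (min_le_right _ _) (by linarith))
  have hχcs : ∀ j : ℕ, HasCompactSupport (fun p : VarSpace d n => χ j p.1) := by
    intro j
    apply HasCompactSupport.intro
      ((hK'.cthickening (r := (j:ℝ))).prod (isCompact_univ (X := ↥(GrassSet d n))))
    intro p hp
    by_contra hne
    apply hp
    refine ⟨?_, trivial⟩
    have h1 : Metric.infDist p.1 K' < (j:ℝ) := by
      by_contra h2
      exact hne (hχzero j p.1 (not_lt.1 h2))
    exact (Metric.thickening_subset_cthickening _ _)
      ((Metric.mem_thickening_iff_infDist_lt hK'ne).2 h1)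
  -- Vi is null outside K' × univ
  have hVi0 : ∀ i, Vi i ((K' ×ˢ (Set.univ : Set ↥(GrassSet d n)))ᶜ) = 0 := by
    intro i
    refine measure_mono_null ?_ (msupport_compl_null (Vi i))
    rw [Set.compl_subset_compl]
    exact (hsupp i).trans (Set.prod_mono hKsub le_rfl)
  have haeVi : ∀ i, ∀ᵐ p ∂(Vi i), p ∈ K' ×ˢ (Set.univ : Set ↥(GrassSet d n)) := by
    intro i
    rw [ae_iff]
    exact hVi0 i
  -- the χ-integrals over Vi compute the mass
  have hVieq : ∀ j : ℕ, 1 ≤ j → ∀ i, (∫ p, χ j p.1 ∂(Vi i)) = ((Vi i) Set.univ).toReal := by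
    intro j hj i
    haveI := hfin i
    have h1 : (∫ p, χ j p.1 ∂(Vi i)) = ∫ _p, (1:ℝ) ∂(Vi i) := by
      refine integral_congr_ae ((haeVi i).mono fun p hp => ?_)
      refine hχone j p.1 ?_
      rw [Metric.infDist_zero_of_mem hp.1]
      have : (1:ℝ) ≤ (j:ℝ) := by exact_mod_cast hj
      linarith
    rw [h1, integral_const, smul_eq_mul, mul_one]; rfl
  have hLim : ∀ j : ℕ, 1 ≤ j → Filter.Tendsto (fun i => ((Vi i) Set.univ).toReal) Filter.atTop
      (nhds (∫ p, χ j p.1 ∂V)) := by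
    intro j hj
    have h := hconv (fun p => χ j p.1) ((hχcont j).comp continuous_fst) (hχcs j)
    exact h.congr fun i => hVieq j hj i
  have hLeq : ∀ j : ℕ, 1 ≤ j → (∫ p, χ j p.1 ∂V) = (∫ p, χ 1 p.1 ∂V) := fun j hj =>
    tendsto_nhds_unique (hLim j hj) (hLim 1 le_rfl)
  -- dominated convergence
  have hDC : Filter.Tendsto (fun j => ∫ p, χ j p.1 ∂V) Filter.atTop
      (nhds (V Set.univ).toReal) := by
    have h1 : Filter.Tendsto (fun j => ∫ p, χ j p.1 ∂V) Filter.atTop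
        (nhds (∫ _p, (1:ℝ) ∂V)) := by
      refine tendsto_integral_of_dominated_convergence (fun _ => (1:ℝ))
        (fun j => ((hχcont j).comp continuous_fst).aestronglyMeasurable)
        (integrable_const 1)
        (fun j => Filter.Eventually.of_forall fun p => by
          rw [Real.norm_eq_abs]; exact hχabs j p)
        (Filter.Eventually.of_forall fun p => ?_)
      have hev : ∀ᶠ j : ℕ in Filter.atTop, χ j p.1 = 1 := by
        rw [Filter.eventually_atTop]
        refine ⟨⌈Metric.infDist p.1 K'⌉₊ + 1, fun j hj => hχone j p.1 ?_⟩
        have h2 : Metric.infDist p.1 K' ≤ (⌈Metric.infDist p.1 K'⌉₊ : ℝ) := Nat.le_ceil _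
        have h3 : ((⌈Metric.infDist p.1 K'⌉₊ + 1 : ℕ) : ℝ) ≤ (j:ℝ) := by exact_mod_cast hj
        push_cast at h3
        linarith
      exact Filter.Tendsto.congr' (hev.mono fun j hj => hj.symm) tendsto_const_nhds
    rw [integral_const, smul_eq_mul, mul_one] at h1
    exact h1
  have hVuniv : (V Set.univ).toReal = ∫ p, χ 1 p.1 ∂V := by
    have h2 : Filter.Tendsto (fun j : ℕ => ∫ p, χ j p.1 ∂V) Filter.atTop
        (nhds (∫ p, χ 1 p.1 ∂V)) := by
      refine Filter.Tendsto.congr' ?_ (tendsto_const_nhds)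
      filter_upwards [Filter.eventually_ge_atTop 1] with j hj
      exact (hLeq j hj).symm
    exact tendsto_nhds_unique hDC h2
  -- V is null outside C := cthickening 2 K' × univ
  set Kc : Set (EuclideanSpace ℝ (Fin n)) := Metric.cthickening 2 K' with hKcdef
  have hKcC : IsCompact Kc := hK'.cthickening
  have hKcK' : K' ⊆ Kc := Metric.self_subset_cthickening K'
  have hKcne : Kc.Nonempty := hK'ne.mono hKcK'
  set C : Set (VarSpace d n) := Kc ×ˢ (Set.univ : Set ↥(GrassSet d n)) with hCdef
  have hCc : IsCompact C := hKcC.prod isCompact_univ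
  have hCmeas : MeasurableSet C := (hKcC.isClosed.measurableSet).prod MeasurableSet.univ
  have hV0 : V Cᶜ = 0 := by
    have hle : (∫ p, χ 2 p.1 ∂V) ≤ ∫ p, C.indicator (fun _ => (1:ℝ)) p ∂V := by
      refine integral_mono
        (integrable_of_bdd_cont V ((hχcont 2).comp continuous_fst) (hχabs 2))
        ((integrable_const 1).indicator hCmeas) fun p => ?_
      by_cases hp : p ∈ C
      · rw [Set.indicator_of_mem hp]
        exact (hχ01 2 p.1).2
      · rw [Set.indicator_of_notMem hp]
        have hp1 : p.1 ∉ Kc := fun h => hp ⟨h, trivial⟩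
        have h2 : ¬ Metric.infDist p.1 K' < 2 := fun h =>
          hp1 ((Metric.thickening_subset_cthickening _ _)
            ((Metric.mem_thickening_iff_infDist_lt hK'ne).2 h))
        have h3 := hχzero 2 p.1 (by push_cast; linarith [not_lt.1 h2])
        rw [h3]
    have hind : (∫ p, C.indicator (fun _ => (1:ℝ)) p ∂V) = (V C).toReal := by
      rw [integral_indicator_const _ hCmeas, smul_eq_mul, mul_one]; rfl
    have h12 : (∫ p, χ 2 p.1 ∂V) = (V Set.univ).toReal := by
      rw [hLeq 2 (by norm_num), ← hVuniv]
    have hmono : V Set.univ ≤ V C := by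
      rw [← ENNReal.ofReal_toReal (measure_ne_top V Set.univ),
        ← ENNReal.ofReal_toReal (measure_ne_top V C)]
      apply ENNReal.ofReal_le_ofReal
      rw [hind] at hle
      linarith [hle, h12]
    have hadd : V C + V Cᶜ = V Set.univ := measure_add_measure_compl hCmeas
    have h4 : V C + V Cᶜ ≤ V C + 0 := by
      rw [hadd, add_zero]
      exact le_trans hmono (le_refl _)
    have h5 := (ENNReal.add_le_add_iff_left (measure_ne_top V C)).1 h4
    exact le_antisymm (by simpa using h5) zero_le
  have haeV : ∀ᵐ p ∂V, p ∈ C := by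
    rw [ae_iff]
    exact hV0
  -- cutoff convergence for bounded continuous functions
  have hconv2 : ∀ f : VarSpace d n → ℝ, Continuous f → (∀ p, |f p| ≤ 1) →
      Filter.Tendsto (fun i => ∫ p, f p ∂(Vi i)) Filter.atTop (nhds (∫ p, f p ∂V)) := by
    intro f hf hfb
    set β : EuclideanSpace ℝ (Fin n) → ℝ := fun y => max 0 (1 - Metric.infDist y Kc) with hβdef
    have hβcont : Continuous β :=
      continuous_const.max (continuous_const.sub (Metric.continuous_infDist_pt Kc))
    have hβ1 : ∀ y ∈ Kc, β y = 1 := fun y hy => by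
      simp only [hβdef, Metric.infDist_zero_of_mem hy, sub_zero]
      exact max_eq_right zero_le_one
    set g : VarSpace d n → ℝ := fun p => f p * β p.1 with hgdef
    have hgc : Continuous g := hf.mul (hβcont.comp continuous_fst)
    have hgcs : HasCompactSupport g := by
      apply HasCompactSupport.intro
        ((hKcC.cthickening (r := (1:ℝ))).prod (isCompact_univ (X := ↥(GrassSet d n))))
      intro p hp
      have hp1 : p.1 ∉ Metric.cthickening 1 Kc := fun h => hp ⟨h, trivial⟩
      have h2 : ¬ Metric.infDist p.1 Kc < 1 := fun h =>
        hp1 ((Metric.thickening_subset_cthickening _ _)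
          ((Metric.mem_thickening_iff_infDist_lt hKcne).2 h))
      have h3 : β p.1 = 0 := by
        simp only [hβdef]
        exact max_eq_left (by linarith [not_lt.1 h2])
      simp [hgdef, h3]
    have hgfV : (∫ p, g p ∂V) = ∫ p, f p ∂V :=
      integral_congr_ae (haeV.mono fun p hp => by simp [hgdef, hβ1 p.1 hp.1])
    have hgfVi : ∀ i, (∫ p, g p ∂(Vi i)) = ∫ p, f p ∂(Vi i) := by
      intro i
      haveI := hfin i
      exact integral_congr_ae ((haeVi i).mono fun p hp => by
        simp [hgdef, hβ1 p.1 (hKcK' hp.1)])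
    have h := hconv g hgc hgcs
    rw [hgfV] at h
    exact (h.congr fun i => hgfVi i)
  -- global flat distance tends to zero
  have hVi0' : ∀ i, Vi i Cᶜ = 0 := fun i =>
    measure_mono_null (Set.compl_subset_compl.2 (Set.prod_mono hKcK' le_rfl)) (hVi0 i)
  have hF := flat_tendsto C hCc V Vi hfin hV0 hVi0' hconv2
  -- final ε-argument
  rw [NormedAddCommGroup.tendsto_nhds_zero]
  intro ε hε
  set c1 : ℝ := C₀ * (1 + 2^d) + 1 with hc1def
  have hC₀pos : (0:ℝ) < C₀ := lt_of_lt_of_le one_pos hC₀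
  have hc1pos : 0 < c1 := by positivity
  set r₀ : ℝ := min (1/2) ((ε/2) / c1) with hr₀def
  have hr₀0 : 0 < r₀ := lt_min (by norm_num) (by positivity)
  have hr₀half : r₀ ≤ 1/2 := min_le_left _ _
  have hbpos : 0 < min 1 ((ε/2) * r₀ ^ d) := lt_min one_pos (by positivity)
  have hFev : ∀ᶠ i in Filter.atTop,
      sSup (flatSet Set.univ V (Vi i)) ≤ min 1 ((ε/2) * r₀ ^ d) := by
    have h := hF (Metric.closedBall_mem_nhds 0 hbpos)
    rw [Filter.mem_map] at h
    filter_upwards [h] with i hi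
    rw [Set.mem_preimage, Metric.mem_closedBall, Real.dist_eq, sub_zero] at hi
    exact le_trans (le_abs_self _) hi
  filter_upwards [hFev] with i hFi
  haveI := hfin i
  set F : ℝ := sSup (flatSet Set.univ V (Vi i)) with hFdef
  have hF0 : 0 ≤ F := flatSet_sSup_nonneg _ _ _
  have hF1 : F ≤ 1 := le_trans hFi (min_le_left _ _)
  have hF2 : F ≤ (ε/2) * r₀ ^ d := le_trans hFi (min_le_right _ _)
  set S : Set ℝ := {δ : ℝ | 0 < δ ∧ ∀ (x : EuclideanSpace ℝ (Fin n)) (r : ℝ),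
    varMass V (Metric.closedBall x r) ≤
        varMass (Vi i) (Metric.thickening δ (Metric.closedBall x r)) + ENNReal.ofReal (δ ^ d) ∧
    varMass (Vi i) (Metric.closedBall x r) ≤
        varMass V (Metric.thickening δ (Metric.closedBall x r)) + ENNReal.ofReal (δ ^ d)} with hSdef
  have hηrfl : etaDist d (varMass V) (varMass (Vi i)) = sInf S := rfl
  set η : ℝ := etaDist d (varMass V) (varMass (Vi i)) with hηdef
  have h1mem : (1:ℝ) ∈ S := by
    have := mem_etaSet V (Vi i) one_pos le_rfl (by rw [one_pow]; exact le_trans hFi (min_le_left _ _))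
    exact this
  have hSbdd : BddBelow S := ⟨0, fun a ha => ha.1.le⟩
  have hη1 : η ≤ 1 := by rw [hηrfl]; exact csInf_le hSbdd h1mem
  have hη0 : 0 ≤ η := by
    rw [hηrfl]
    exact Real.sInf_nonneg fun a ha => ha.1.le
  have hmain : ∀ (x : EuclideanSpace ℝ (Fin n)), x ∈ msupport (varMass V) → ∀ r : ℝ, 0 < r →
      flatDistIn (Metric.ball x r ×ˢ (Set.univ : Set ↥(GrassSet d n))) V (Vi i) /
        (η + r) ^ d ≤ ε / 2 := by
    intro x hx r hr
    have hηr : 0 < η + r := by linarith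
    have hden : 0 < (η + r) ^ d := pow_pos hηr d
    rw [flatDistIn_eq]
    rcases le_or_gt r r₀ with hrr | hrr
    · -- small radius regime
      have hr2 : r ≤ 2 := by linarith
      obtain ⟨δ', hδ'mem, hδ'lt⟩ : ∃ δ' ∈ S, δ' < η + r := by
        apply exists_lt_of_csInf_lt ⟨1, h1mem⟩
        rw [← hηrfl]
        linarith
      have hδ'0 : 0 < δ' := hδ'mem.1
      have hrδ2 : r + δ' ≤ 2 := by linarith
      have hμr : ((varMass V) (Metric.ball x r)).toReal ≤ C₀ * r ^ d := by
        have h := (hreg x hx r (Set.mem_Ioc.2 ⟨hr, hr2⟩)).2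
        exact ENNReal.toReal_le_of_le_ofReal (by positivity) h
      have hνr : ((varMass (Vi i)) (Metric.ball x r)).toReal ≤ C₀ * (r + δ') ^ d + δ' ^ d := by
        have h1 : varMass (Vi i) (Metric.ball x r) ≤ varMass (Vi i) (Metric.closedBall x r) :=
          measure_mono Metric.ball_subset_closedBall
        have h2 := (hδ'mem.2 x r).2
        have h3 : Metric.thickening δ' (Metric.closedBall x r) ⊆ Metric.ball x (r + δ') := by
          intro y hy
          obtain ⟨z, hz, hzy⟩ := Metric.mem_thickening_iff.1 hy
          rw [Metric.mem_ball]
          have h4 := Metric.mem_closedBall.1 hz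
          calc dist y x ≤ dist y z + dist z x := dist_triangle _ _ _
            _ < δ' + r := by linarith
            _ = r + δ' := by ring
        have h4 := (hreg x hx (r + δ') (Set.mem_Ioc.2 ⟨by positivity, hrδ2⟩)).2
        have h5 : varMass (Vi i) (Metric.ball x r) ≤
            ENNReal.ofReal (C₀ * (r + δ') ^ d) + ENNReal.ofReal (δ' ^ d) :=
          le_trans h1 (le_trans h2 (add_le_add (le_trans (measure_mono h3) h4) le_rfl))
        rw [← ENNReal.ofReal_add (by positivity) (by positivity)] at h5
        exact ENNReal.toReal_le_of_le_ofReal (by positivity) h5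
      have hnum := flat_ball_le hd hdn V (Vi i) x hr
      have hpow1 : r ^ d ≤ (η + r) ^ d := pow_le_pow_left₀ hr.le (by linarith) d
      have hpow2 : (r + δ') ^ d ≤ 2 ^ d * (η + r) ^ d := by
        calc (r + δ') ^ d ≤ (2 * (η + r)) ^ d :=
              pow_le_pow_left₀ (by positivity) (by linarith) d
          _ = 2 ^ d * (η + r) ^ d := mul_pow 2 (η + r) d
      have hpow3 : δ' ^ d ≤ (η + r) ^ d := pow_le_pow_left₀ hδ'0.le (by linarith) d
      have hsum : C₀ * r ^ d + (C₀ * (r + δ') ^ d + δ' ^ d) ≤ c1 * (η + r) ^ d := by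
        have e1 : C₀ * r ^ d ≤ C₀ * (η + r) ^ d :=
          mul_le_mul_of_nonneg_left hpow1 hC₀pos.le
        have e2 : C₀ * (r + δ') ^ d ≤ C₀ * (2 ^ d * (η + r) ^ d) :=
          mul_le_mul_of_nonneg_left hpow2 hC₀pos.le
        have e3 : (C₀ * (1 + 2 ^ d) + 1) * (η + r) ^ d =
            C₀ * (η + r) ^ d + C₀ * (2 ^ d * (η + r) ^ d) + (η + r) ^ d := by ring
        rw [hc1def, e3]
        linarith
      have hchain : sSup (flatSet (Metric.ball x r ×ˢ (Set.univ : Set ↥(GrassSet d n)))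
          V (Vi i)) ≤ (r * c1) * (η + r) ^ d := by
        refine le_trans hnum ?_
        calc r * (((varMass V) (Metric.ball x r)).toReal +
              ((varMass (Vi i)) (Metric.ball x r)).toReal) ≤
              r * (C₀ * r ^ d + (C₀ * (r + δ') ^ d + δ' ^ d)) := by
                apply mul_le_mul_of_nonneg_left _ hr.le
                linarith
          _ ≤ r * (c1 * (η + r) ^ d) := mul_le_mul_of_nonneg_left hsum hr.le
          _ = (r * c1) * (η + r) ^ d := by ring
      have hrc1 : r * c1 ≤ ε / 2 := by
        have h6 : r ≤ (ε/2) / c1 := le_trans hrr (min_le_right _ _)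
        calc r * c1 ≤ ((ε/2) / c1) * c1 := mul_le_mul_of_nonneg_right h6 hc1pos.le
          _ = ε / 2 := div_mul_cancel₀ _ (ne_of_gt hc1pos)
      rw [div_le_iff₀ hden]
      calc sSup (flatSet (Metric.ball x r ×ˢ (Set.univ : Set ↥(GrassSet d n))) V (Vi i)) ≤
            (r * c1) * (η + r) ^ d := hchain
        _ ≤ (ε / 2) * (η + r) ^ d := mul_le_mul_of_nonneg_right hrc1 hden.le
    · -- large radius regime
      have h1 : sSup (flatSet (Metric.ball x r ×ˢ (Set.univ : Set ↥(GrassSet d n)))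
          V (Vi i)) ≤ F := flatSet_mono_le
      have hpow : r₀ ^ d ≤ (η + r) ^ d := pow_le_pow_left₀ hr₀0.le (by linarith) d
      calc sSup (flatSet (Metric.ball x r ×ˢ (Set.univ : Set ↥(GrassSet d n))) V (Vi i)) /
            (η + r) ^ d ≤ F / (η + r) ^ d := (div_le_div_iff_of_pos_right hden).2 h1
        _ ≤ F / r₀ ^ d := div_le_div_of_nonneg_left hF0 (pow_pos hr₀0 d) hpow
        _ ≤ ε / 2 := by
            rw [div_le_iff₀ (pow_pos hr₀0 d)]
            exact hF2
  have hub : varDelta V (Vi i) ≤ ε / 2 := by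
    unfold varDelta
    refine Real.sSup_le ?_ (by positivity)
    rintro t ⟨x, hx, r, hr, rfl⟩
    exact hmain x hx r hr
  have hlb : 0 ≤ varDelta V (Vi i) := by
    unfold varDelta
    refine Real.sSup_nonneg ?_
    rintro t ⟨x, hx, r, hr, rfl⟩
    have hηr : 0 < η + r := by linarith
    rw [flatDistIn_eq]
    exact div_nonneg (flatSet_sSup_nonneg _ _ _) (pow_pos hηr d).le
  rw [Real.norm_eq_abs, abs_of_nonneg hlb]
  linarith

end
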